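/- Let W = [-1,1] × [0,1] ⊂ ℝ² and let u : W → ℝ be defined by u(x¹,x²) = 1 if x¹ > 0 and u(x¹,x²) = 0 if x¹ ≤ 0. Then for 1 ≤ p < ∞ and sufficiently small ε > 0, there is no C¹ function φ on W with ‖u − φ‖_{L^p(W)} + ‖∇φ‖_{L^p(W)} < ε. In particular, if (2 + 2^{1/p'}) ε < 1 with 1/p + 1/p' = 1, no such φ exists. -/

import Mathlib

open MeasureTheory


lemma holder_one {α : Type*} [MeasurableSpace α] (μ : Measure α) [IsFiniteMeasure μ]
    {p p' : ℝ} (hp : 1 ≤ p) (hpp' : 1 / p + 1 / p' = 1)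
    {g : α → ℝ} (hg0 : ∀ x, 0 ≤ g x) (hmeas : AEStronglyMeasurable g μ)
    {C : ℝ} (hC : ∀ᵐ x ∂μ, g x ≤ C) :
    ∫ x, g x ∂μ ≤ (∫ x, g x ^ p ∂μ) ^ (1 / p) * (μ Set.univ).toReal ^ (1 / p') := by
  rcases eq_or_lt_of_le hp with h1 | h1
  · have hq : 1 / p' = 0 := by rw [← h1] at hpp'; linarith
    rw [← h1, hq, Real.rpow_zero, mul_one]
    norm_num
  · have hpq : p.HolderConjugate p' := Real.holderConjugate_iff.mpr ⟨h1, by rw [← one_div, ← one_div]; exact hpp'⟩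
    have hgmem : MemLp g (ENNReal.ofReal p) μ :=
      MemLp.of_bound hmeas C (hC.mono fun x hx => by
        rw [Real.norm_of_nonneg (hg0 x)]; exact hx)
    have h1mem : MemLp (fun _ : α => (1 : ℝ)) (ENNReal.ofReal p') μ := memLp_const 1
    have key := integral_mul_le_Lp_mul_Lq_of_nonneg hpq
      (Filter.Eventually.of_forall hg0) (Filter.Eventually.of_forall fun _ => zero_le_one)
      hgmem h1mem
    simpa [Real.one_rpow, integral_const, smul_eq_mul, measureReal_def] using key


lemma fubini_strip {g : ℝ × ℝ → ℝ} (hg : Continuous g) (a b : ℝ) :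
    Integrable (fun y => ∫ x in Set.Ioc a b, g (x, y)) (volume.restrict (Set.Ioc (0:ℝ) 1)) ∧
    ∫ y in Set.Ioc (0:ℝ) 1, ∫ x in Set.Ioc a b, g (x, y)
      = ∫ q in Set.Ioc a b ×ˢ Set.Ioc (0:ℝ) 1, g q := by
  set μ := volume.restrict (Set.Ioc a b)
  set ν := volume.restrict (Set.Ioc (0:ℝ) 1)
  have hprod : μ.prod ν = volume.restrict (Set.Ioc a b ×ˢ Set.Ioc (0:ℝ) 1) := by
    rw [Measure.prod_restrict, ← Measure.volume_eq_prod]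
  have hint : Integrable g (μ.prod ν) := by
    rw [hprod]
    exact ((hg.continuousOn.integrableOn_compact (isCompact_Icc.prod isCompact_Icc)).mono_set
      (Set.prod_mono Set.Ioc_subset_Icc_self Set.Ioc_subset_Icc_self))
  constructor
  · exact hint.integral_prod_right
  · rw [← hprod, ← integral_prod_symm g hint]


lemma ftc_bound {φ : ℝ × ℝ → ℝ} (hφ : ContDiff ℝ 1 φ) (y a b : ℝ)
    (ha : a ∈ Set.Icc (-1:ℝ) 0) (hb : b ∈ Set.Icc (0:ℝ) 1) :
    |φ (b, y) - φ (a, y)| ≤ ∫ t in Set.Ioc (-1:ℝ) 1, ‖fderiv ℝ φ (t, y)‖ := by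
  have hab : a ≤ b := ha.2.trans hb.1
  have hDcont : Continuous fun q : ℝ × ℝ => fderiv ℝ φ q := hφ.continuous_fderiv one_ne_zero
  have hcurve : Continuous fun t : ℝ => ((t, y) : ℝ × ℝ) := continuous_id.prodMk continuous_const
  have hccont : Continuous fun t : ℝ => (fderiv ℝ φ (t, y)) ((1 : ℝ), (0 : ℝ)) :=
    (hDcont.comp hcurve).clm_apply continuous_const
  have hNcont : Continuous fun t : ℝ => ‖fderiv ℝ φ (t, y)‖ := (hDcont.comp hcurve).norm
  have hderiv : ∀ t : ℝ, HasDerivAt (fun s => φ (s, y)) ((fderiv ℝ φ (t, y)) (1, 0)) t := by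
    intro t
    have h1 : HasFDerivAt φ (fderiv ℝ φ (t, y)) (t, y) :=
      (hφ.differentiable one_ne_zero (t, y)).hasFDerivAt
    have h2 : HasDerivAt (fun s : ℝ => ((s, y) : ℝ × ℝ)) (1, 0) t :=
      (hasDerivAt_id t).prodMk (hasDerivAt_const t y)
    exact h1.comp_hasDerivAt t h2
  have hFTC : φ (b, y) - φ (a, y) = ∫ t in a..b, (fderiv ℝ φ (t, y)) (1, 0) :=
    (intervalIntegral.integral_eq_sub_of_hasDerivAt (fun t _ => hderiv t)
      (hccont.intervalIntegrable a b)).symm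
  rw [hFTC]
  calc |∫ t in a..b, (fderiv ℝ φ (t, y)) (1, 0)|
      ≤ ∫ t in a..b, |(fderiv ℝ φ (t, y)) (1, 0)| :=
        intervalIntegral.abs_integral_le_integral_abs hab
    _ ≤ ∫ t in a..b, ‖fderiv ℝ φ (t, y)‖ := by
        refine intervalIntegral.integral_mono_on hab (hccont.abs.intervalIntegrable a b)
          (hNcont.intervalIntegrable a b) fun t _ => ?_
        calc |(fderiv ℝ φ (t, y)) (1, 0)| = ‖(fderiv ℝ φ (t, y)) ((1:ℝ), (0:ℝ))‖ := rfl
          _ ≤ ‖fderiv ℝ φ (t, y)‖ * ‖((1:ℝ), (0:ℝ))‖ := ContinuousLinearMap.le_opNorm _ _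
          _ = ‖fderiv ℝ φ (t, y)‖ := by
              rw [Prod.norm_def]; simp
    _ = ∫ t in Set.Ioc a b, ‖fderiv ℝ φ (t, y)‖ := intervalIntegral.integral_of_le hab
    _ ≤ ∫ t in Set.Ioc (-1:ℝ) 1, ‖fderiv ℝ φ (t, y)‖ := by
        refine setIntegral_mono_set
          ((hNcont.continuousOn.integrableOn_compact isCompact_Icc).mono_set Set.Ioc_subset_Icc_self)
          (Filter.Eventually.of_forall fun t => norm_nonneg _)
          (Filter.Eventually.of_forall ?_)
        exact Set.Ioc_subset_Ioc ha.1 hb.2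

lemma slice_bound {φ : ℝ × ℝ → ℝ} (hφ : ContDiff ℝ 1 φ) (y : ℝ) :
    (1:ℝ) ≤ (∫ a in Set.Ioc (-1:ℝ) 0, |φ (a, y)|) + (∫ b in Set.Ioc (0:ℝ) 1, |1 - φ (b, y)|)
      + ∫ t in Set.Ioc (-1:ℝ) 1, ‖fderiv ℝ φ (t, y)‖ := by
  set L := ∫ a in Set.Ioc (-1:ℝ) 0, |φ (a, y)| with hL
  set R := ∫ b in Set.Ioc (0:ℝ) 1, |1 - φ (b, y)| with hR
  set G := ∫ t in Set.Ioc (-1:ℝ) 1, ‖fderiv ℝ φ (t, y)‖ with hG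
  have hφc : Continuous φ := hφ.continuous
  have hLi : IntegrableOn (fun a => |φ (a, y)|) (Set.Ioc (-1:ℝ) 0) :=
    (((hφc.comp (continuous_id.prodMk continuous_const)).abs).continuousOn.integrableOn_compact
      isCompact_Icc).mono_set Set.Ioc_subset_Icc_self
  have hRi : IntegrableOn (fun b => |1 - φ (b, y)|) (Set.Ioc (0:ℝ) 1) :=
    (((continuous_const.sub (hφc.comp
      (continuous_id.prodMk continuous_const))).abs).continuousOn.integrableOn_compact
      isCompact_Icc).mono_set Set.Ioc_subset_Icc_self
  have hvol1 : (volume (Set.Ioc (-1:ℝ) 0)).toReal = 1 := by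
    rw [Real.volume_Ioc]; norm_num
  have hvol2 : (volume (Set.Ioc (0:ℝ) 1)).toReal = 1 := by
    rw [Real.volume_Ioc]; norm_num
  have hfin1 : volume (Set.Ioc (-1:ℝ) 0) ≠ ⊤ := by rw [Real.volume_Ioc]; exact ENNReal.ofReal_ne_top
  have hfin2 : volume (Set.Ioc (0:ℝ) 1) ≠ ⊤ := by rw [Real.volume_Ioc]; exact ENNReal.ofReal_ne_top
  have key : ∀ a ∈ Set.Ioc (-1:ℝ) 0, ∀ b ∈ Set.Ioc (0:ℝ) 1,
      1 - G ≤ |φ (a, y)| + |1 - φ (b, y)| := by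
    intro a ha b hb
    have h := ftc_bound hφ y a b (Set.Ioc_subset_Icc_self ha) (Set.Ioc_subset_Icc_self hb)
    have h1 := le_abs_self (φ (a, y))
    have h2 := le_abs_self (1 - φ (b, y))
    have h3 := le_abs_self (φ (b, y) - φ (a, y))
    have h4 := neg_abs_le (φ (a, y))
    linarith
  have step1 : ∀ b ∈ Set.Ioc (0:ℝ) 1, 1 - G - L ≤ |1 - φ (b, y)| := by
    intro b hb
    have hconst : ∫ _a in Set.Ioc (-1:ℝ) 0, (1 - G - |1 - φ (b, y)|) = 1 - G - |1 - φ (b, y)| := by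
      rw [setIntegral_const, measureReal_def, hvol1, one_smul]
    have hmono : ∫ _a in Set.Ioc (-1:ℝ) 0, (1 - G - |1 - φ (b, y)|)
        ≤ ∫ a in Set.Ioc (-1:ℝ) 0, |φ (a, y)| := by
      refine setIntegral_mono_on (integrableOn_const hfin1) hLi
        measurableSet_Ioc fun a ha => ?_
      have := key a ha b hb
      linarith
    rw [hconst] at hmono
    linarith [hmono]
  have step2 : 1 - G - L ≤ R := by
    have hconst : ∫ _b in Set.Ioc (0:ℝ) 1, (1 - G - L) = 1 - G - L := by
      rw [setIntegral_const, measureReal_def, hvol2, one_smul]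
    have hmono : ∫ _b in Set.Ioc (0:ℝ) 1, (1 - G - L)
        ≤ ∫ b in Set.Ioc (0:ℝ) 1, |1 - φ (b, y)| := by
      refine setIntegral_mono_on (integrableOn_const hfin2) hRi
        measurableSet_Ioc fun b hb => step1 b hb
    rw [hconst] at hmono
    exact hmono
  linarith

theorem stmt_10
    (W : Set (ℝ × ℝ)) (hW : W = Set.Icc (-1 : ℝ) 1 ×ˢ Set.Icc (0 : ℝ) 1)
    (u : ℝ × ℝ → ℝ) (hu : ∀ q : ℝ × ℝ, u q = if 0 < q.1 then 1 else 0)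
    (p p' : ℝ) (hp : 1 ≤ p) (hpp' : 1 / p + 1 / p' = 1)
    (ε : ℝ) (hε : 0 < ε) (hsmall : (2 + 2 ^ (1 / p')) * ε < 1) :
    ¬ ∃ φ : ℝ × ℝ → ℝ, ContDiff ℝ 1 φ ∧
        (∫ q in W, |u q - φ q| ^ p) ^ (1 / p) +
          (∫ q in W, ‖fderiv ℝ φ q‖ ^ p) ^ (1 / p) < ε := by
  rintro ⟨φ, hφ, hlt⟩
  have hp0 : (0:ℝ) < p := lt_of_lt_of_le one_pos hp
  set A := (∫ q in W, |u q - φ q| ^ p) ^ (1 / p) with hA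
  set B := (∫ q in W, ‖fderiv ℝ φ q‖ ^ p) ^ (1 / p) with hB
  set c := (2:ℝ) ^ (1 / p') with hc
  -- basic sets
  set sL := Set.Ioc (-1:ℝ) 0 ×ˢ Set.Ioc (0:ℝ) 1 with hsL
  set sR := Set.Ioc (0:ℝ) 1 ×ˢ Set.Ioc (0:ℝ) 1 with hsR
  set sG := Set.Ioc (-1:ℝ) 1 ×ˢ Set.Ioc (0:ℝ) 1 with hsG
  have hvs : ∀ a b : ℝ, volume (Set.Ioc a b ×ˢ Set.Ioc (0:ℝ) 1) = ENNReal.ofReal (b - a) := by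
    intro a b
    rw [Measure.volume_eq_prod, Measure.prod_prod, Real.volume_Ioc, Real.volume_Ioc]
    norm_num
  have hWmeas : MeasurableSet W := by rw [hW]; exact measurableSet_Icc.prod measurableSet_Icc
  have hWvol : volume W = ENNReal.ofReal 2 := by
    rw [hW, Measure.volume_eq_prod, Measure.prod_prod, Real.volume_Icc, Real.volume_Icc]
    norm_num
  have hWfin : volume W ≠ ⊤ := by rw [hWvol]; exact ENNReal.ofReal_ne_top
  -- subsets
  have hsLW : sL ⊆ W := by
    rw [hW, hsL]
    exact Set.prod_mono (Set.Ioc_subset_Icc_self.trans (Set.Icc_subset_Icc le_rfl (by norm_num)))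
      Set.Ioc_subset_Icc_self
  have hsRW : sR ⊆ W := by
    rw [hW, hsR]
    exact Set.prod_mono (Set.Ioc_subset_Icc_self.trans (Set.Icc_subset_Icc (by norm_num) le_rfl))
      Set.Ioc_subset_Icc_self
  have hsGW : sG ⊆ W := by
    rw [hW, hsG]; exact Set.prod_mono Set.Ioc_subset_Icc_self Set.Ioc_subset_Icc_self
  -- continuity and measurability
  have hφc : Continuous φ := hφ.continuous
  have hDc : Continuous fun q : ℝ × ℝ => ‖fderiv ℝ φ q‖ := (hφ.continuous_fderiv one_ne_zero).norm
  have hum : Measurable u := by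
    have : u = fun q : ℝ × ℝ => if 0 < q.1 then (1:ℝ) else 0 := funext hu
    rw [this]
    exact Measurable.ite (measurableSet_lt measurable_const measurable_fst)
      measurable_const measurable_const
  have hfm : Measurable fun q => |u q - φ q| := (hum.sub hφc.measurable).abs
  -- bounds on W
  obtain ⟨M, hM⟩ : ∃ M, ∀ q ∈ W, ‖φ q‖ ≤ M := by
    rcases (hW ▸ (isCompact_Icc.prod isCompact_Icc) :
        IsCompact W).exists_bound_of_continuousOn hφc.continuousOn with ⟨M, hM⟩
    exact ⟨M, hM⟩
  obtain ⟨N, hN⟩ : ∃ N, ∀ q ∈ W, ‖fderiv ℝ φ q‖ ≤ N := by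
    rcases (hW ▸ (isCompact_Icc.prod isCompact_Icc) :
        IsCompact W).exists_bound_of_continuousOn (hφ.continuous_fderiv one_ne_zero).continuousOn
      with ⟨N, hN⟩
    exact ⟨N, fun q hq => (norm_norm (fderiv ℝ φ q) ▸ hN q hq : _)⟩
  have hfb : ∀ q ∈ W, |u q - φ q| ≤ 1 + M := by
    intro q hq
    have h1 : |u q| ≤ 1 := by rw [hu q]; split <;> norm_num
    have h2 : |φ q| ≤ M := hM q hq
    calc |u q - φ q| ≤ |u q| + |φ q| := abs_sub _ _
      _ ≤ 1 + M := add_le_add h1 h2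
  have hN0 : ∀ q ∈ W, ‖fderiv ℝ φ q‖ ≤ max N 0 := fun q hq => (hN q hq).trans (le_max_left _ _)
  -- integrability of the p-th powers on W
  have hrpc : Continuous fun x : ℝ => x ^ p := Real.continuous_rpow_const hp0.le
  have hfpm : Measurable fun q => |u q - φ q| ^ p := hrpc.measurable.comp hfm
  have hDpm : Measurable fun q => ‖fderiv ℝ φ q‖ ^ p := hrpc.measurable.comp hDc.measurable
  have hfpint : IntegrableOn (fun q => |u q - φ q| ^ p) W := by
    refine Measure.integrableOn_of_bounded (M := (1 + M) ^ p) hWfin hfpm.aestronglyMeasurable ?_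
    refine (ae_restrict_iff' hWmeas).2 (Filter.Eventually.of_forall fun q hq => ?_)
    rw [Real.norm_of_nonneg (Real.rpow_nonneg (abs_nonneg _) _)]
    exact Real.rpow_le_rpow (abs_nonneg _) (hfb q hq) hp0.le
  have hDpint : IntegrableOn (fun q => ‖fderiv ℝ φ q‖ ^ p) W := by
    refine Measure.integrableOn_of_bounded (M := (max N 0) ^ p) hWfin hDpm.aestronglyMeasurable ?_
    refine (ae_restrict_iff' hWmeas).2 (Filter.Eventually.of_forall fun q hq => ?_)
    rw [Real.norm_of_nonneg (Real.rpow_nonneg (norm_nonneg _) _)]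
    exact Real.rpow_le_rpow (norm_nonneg _) (hN0 q hq) hp0.le
  -- generic Hölder on a substrip
  have holder_sub : ∀ (S : Set (ℝ × ℝ)), MeasurableSet S → S ⊆ W →
      ∀ (g : ℝ × ℝ → ℝ), (∀ q, 0 ≤ g q) →
      AEStronglyMeasurable g (volume.restrict S) →
      (∀ q ∈ W, g q ≤ 1 + M + max N 0) →
      IntegrableOn (fun q => g q ^ p) W →
      ∫ q in S, g q ≤ (∫ q in W, g q ^ p) ^ (1 / p) * (volume S).toReal ^ (1 / p') := by
    intro S hSm hSW g hg0 hgm hgb hgpint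
    have hSfin : volume S ≠ ⊤ := fun h =>
      hWfin (eq_top_iff.2 (h ▸ measure_mono hSW))
    haveI : IsFiniteMeasure (volume.restrict S) :=
      ⟨by rw [Measure.restrict_apply_univ]; exact hSfin.lt_top⟩
    have hbd : ∀ᵐ x ∂(volume.restrict S), g x ≤ 1 + M + max N 0 :=
      (ae_restrict_iff' hSm).2 (Filter.Eventually.of_forall fun q hq => hgb q (hSW hq))
    have h1 := holder_one (volume.restrict S) hp hpp' hg0 hgm hbd
    rw [Measure.restrict_apply_univ] at h1
    refine h1.trans (mul_le_mul_of_nonneg_right ?_ (Real.rpow_nonneg ENNReal.toReal_nonneg _))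
    refine Real.rpow_le_rpow (integral_nonneg fun q => Real.rpow_nonneg (hg0 q) _) ?_
      (by positivity)
    exact setIntegral_mono_set hgpint
      (Filter.Eventually.of_forall fun q => Real.rpow_nonneg (hg0 q) _)
      (Filter.Eventually.of_forall hSW)
  -- apply Hölder to the three strips
  have hbound1 : ∀ q ∈ W, |u q - φ q| ≤ 1 + M + max N 0 := fun q hq => by
    have := hfb q hq; have := le_max_right N 0; linarith
  have hbound2 : ∀ q ∈ W, ‖fderiv ℝ φ q‖ ≤ 1 + M + max N 0 := fun q hq => by
    have := hN0 q hq; have := hM q hq; have := norm_nonneg (φ q); linarith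
  have hHL : ∫ q in sL, |u q - φ q| ≤ A := by
    have h := holder_sub sL (measurableSet_Ioc.prod measurableSet_Ioc) hsLW
      (fun q => |u q - φ q|) (fun q => abs_nonneg _) hfm.aestronglyMeasurable.restrict
      hbound1 hfpint
    rw [hsL, hvs (-1) 0] at h
    have h2 : ((ENNReal.ofReal ((0:ℝ) - (-1))).toReal : ℝ) = 1 := by
      rw [ENNReal.toReal_ofReal (by norm_num)]; norm_num
    rw [h2, Real.one_rpow, mul_one] at h
    exact h
  have hHR : ∫ q in sR, |u q - φ q| ≤ A := by
    have h := holder_sub sR (measurableSet_Ioc.prod measurableSet_Ioc) hsRW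
      (fun q => |u q - φ q|) (fun q => abs_nonneg _) hfm.aestronglyMeasurable.restrict
      hbound1 hfpint
    rw [hsR, hvs 0 1] at h
    have h2 : ((ENNReal.ofReal ((1:ℝ) - 0)).toReal : ℝ) = 1 := by
      rw [ENNReal.toReal_ofReal (by norm_num)]; norm_num
    rw [h2, Real.one_rpow, mul_one] at h
    exact h
  have hHG : ∫ q in sG, ‖fderiv ℝ φ q‖ ≤ B * c := by
    have h := holder_sub sG (measurableSet_Ioc.prod measurableSet_Ioc) hsGW
      (fun q => ‖fderiv ℝ φ q‖) (fun q => norm_nonneg _) hDc.aestronglyMeasurable.restrict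
      hbound2 hDpint
    rw [hsG, hvs (-1) 1] at h
    have h2 : ((ENNReal.ofReal ((1:ℝ) - (-1))).toReal : ℝ) = 2 := by
      rw [ENNReal.toReal_ofReal (by norm_num)]; norm_num
    rw [h2] at h
    exact h
  -- Fubini + slice bound
  have h1 := fubini_strip (hφc.abs) (-1) 0
  have h2 := fubini_strip (g := fun q => |1 - φ q|) ((continuous_const.sub hφc).abs) 0 1
  have h3 := fubini_strip hDc (-1) 1
  have hone : (1:ℝ) = ∫ _y in Set.Ioc (0:ℝ) 1, (1:ℝ) := by
    rw [setIntegral_const, measureReal_def, Real.volume_Ioc]; norm_num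
  have hmain : (1:ℝ) ≤ (∫ q in sL, |φ q|) + (∫ q in sR, |1 - φ q|)
      + ∫ q in sG, ‖fderiv ℝ φ q‖ := by
    have hsumint : Integrable (fun y => (∫ a in Set.Ioc (-1:ℝ) 0, |φ (a, y)|)
        + (∫ b in Set.Ioc (0:ℝ) 1, |1 - φ (b, y)|)
        + ∫ t in Set.Ioc (-1:ℝ) 1, ‖fderiv ℝ φ (t, y)‖)
        (volume.restrict (Set.Ioc (0:ℝ) 1)) := (h1.1.add h2.1).add h3.1
    have hconstint : Integrable (fun _ : ℝ => (1:ℝ)) (volume.restrict (Set.Ioc (0:ℝ) 1)) :=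
      integrableOn_const (by rw [Real.volume_Ioc]; exact ENNReal.ofReal_ne_top)
    have hstep : (1:ℝ) ≤ ∫ y in Set.Ioc (0:ℝ) 1,
        ((∫ a in Set.Ioc (-1:ℝ) 0, |φ (a, y)|) + (∫ b in Set.Ioc (0:ℝ) 1, |1 - φ (b, y)|)
          + ∫ t in Set.Ioc (-1:ℝ) 1, ‖fderiv ℝ φ (t, y)‖) := by
      have h := integral_mono hconstint hsumint (fun y => slice_bound hφ y)
      rw [← hone] at h
      exact h
    have h12 : Integrable (fun y => (∫ a in Set.Ioc (-1:ℝ) 0, |φ (a, y)|)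
        + ∫ b in Set.Ioc (0:ℝ) 1, |1 - φ (b, y)|) (volume.restrict (Set.Ioc (0:ℝ) 1)) :=
      h1.1.add h2.1
    rw [integral_add h12 h3.1, integral_add h1.1 h2.1, h1.2, h2.2, h3.2] at hstep
    exact hstep
  -- replace |φ| and |1-φ| by |u - φ| on the strips
  have hEL : ∫ q in sL, |φ q| = ∫ q in sL, |u q - φ q| := by
    refine setIntegral_congr_fun (measurableSet_Ioc.prod measurableSet_Ioc) fun q hq => ?_
    rw [hu q, if_neg (not_lt.2 hq.1.2), zero_sub, abs_neg]
  have hER : ∫ q in sR, |1 - φ q| = ∫ q in sR, |u q - φ q| := by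
    refine setIntegral_congr_fun (measurableSet_Ioc.prod measurableSet_Ioc) fun q hq => ?_
    rw [hu q, if_pos hq.1.1]
  rw [hEL, hER] at hmain
  -- conclude
  have hA0 : 0 ≤ A := Real.rpow_nonneg
    (integral_nonneg fun q => Real.rpow_nonneg (abs_nonneg _) _) _
  have hB0 : 0 ≤ B := Real.rpow_nonneg
    (integral_nonneg fun q => Real.rpow_nonneg (norm_nonneg _) _) _
  have hc0 : (0:ℝ) ≤ c := Real.rpow_nonneg (by norm_num) _
  nlinarith [mul_lt_mul_of_pos_left hlt (by positivity : (0:ℝ) < 2 + c),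
    mul_nonneg hc0 hA0, mul_nonneg hc0 hB0]
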